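/- Let Λ = αℤ^d × βℤ^d with α, β > 0 and let K_{m',n',m,n} (with (m',n'), (m,n) ∈ Λ) be a kernel satisfying all four conditions: sup_{n} Σ_{n'} sup_{m'} Σ_{m} |K_{m',n',m,n}| < ∞; sup_{n'} Σ_{n} sup_{m} Σ_{m'} |K_{m',n',m,n}| < ∞; sup_{(m',n')} Σ_{(m,n)} |K_{m',n',m,n}| < ∞; and sup_{(m,n)} Σ_{(m',n')} |K_{m',n',m,n}| < ∞. Then for every 1 ≤ p, q ≤ ∞ the operator (Kc)_{m',n'} = Σ_{(m,n)∈Λ} K_{m',n',m,n} c_{m,n} is continuous on ℓ^{p,q}(Λ): there exists C > 0 such that ‖Kc‖_{ℓ^{p,q}} ≤ C ‖c‖_{ℓ^{p,q}} for all c ∈ ℓ^{p,q}(Λ). -/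

import Mathlib

open scoped ENNReal NNReal

noncomputable section

/-- The `ℓ^p` "norm" (valued in `ℝ≥0∞`) of a family of values in `ℝ≥0∞`. -/
def eSum {ι : Type*} (p : ℝ≥0∞) (f : ι → ℝ≥0∞) : ℝ≥0∞ :=
  if p = ∞ then ⨆ i, f i else (∑' i, (f i) ^ p.toReal) ^ (1 / p.toReal)

/-- The mixed `ℓ^{p,q}` norm `( Σ_n ( Σ_m |c_{m,n}|^p )^{q/p} )^{1/q}` of a doubly indexed
sequence (suprema replacing sums when `p = ∞` or `q = ∞`). -/
def lpqNorm {ι : Type*} (p q : ℝ≥0∞) (c : ι → ι → ℂ) : ℝ≥0∞ :=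
  eSum q (fun n => eSum p (fun m => (‖c m n‖₊ : ℝ≥0∞)))

namespace S9

open MeasureTheory

variable {ι : Type*}

lemma eSum_top (f : ι → ℝ≥0∞) : eSum ∞ f = ⨆ i, f i := by simp [eSum]

lemma eSum_of_ne_top {p : ℝ≥0∞} (hp : p ≠ ∞) (f : ι → ℝ≥0∞) :
    eSum p f = (∑' i, (f i) ^ p.toReal) ^ (1 / p.toReal) := by simp [eSum, hp]

lemma eSum_one (f : ι → ℝ≥0∞) : eSum 1 f = ∑' i, f i := by
  simp [eSum]

lemma toReal_pos' {p : ℝ≥0∞} (hp : 1 ≤ p) (hp' : p ≠ ∞) : 0 < p.toReal := by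
  have h1 : (1 : ℝ≥0∞).toReal ≤ p.toReal := ENNReal.toReal_mono hp' hp
  simpa using lt_of_lt_of_le zero_lt_one h1

lemma one_le_toReal {p : ℝ≥0∞} (hp : 1 ≤ p) (hp' : p ≠ ∞) : 1 ≤ p.toReal := by
  have h1 : (1 : ℝ≥0∞).toReal ≤ p.toReal := ENNReal.toReal_mono hp' hp
  simpa using h1

lemma one_lt_toReal {p : ℝ≥0∞} (hp : 1 < p) (hp' : p ≠ ∞) : 1 < p.toReal := by
  have h1 : (1 : ℝ≥0∞).toReal < p.toReal := ENNReal.toReal_strict_mono hp' hp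
  simpa using h1

lemma eSum_mono {p : ℝ≥0∞} {f g : ι → ℝ≥0∞} (h : ∀ i, f i ≤ g i) :
    eSum p f ≤ eSum p g := by
  unfold eSum
  split
  · exact iSup_mono h
  · exact ENNReal.rpow_le_rpow
      (ENNReal.tsum_le_tsum fun i => ENNReal.rpow_le_rpow (h i) ENNReal.toReal_nonneg)
      (by positivity)

lemma le_eSum {p : ℝ≥0∞} (hp : 1 ≤ p) (f : ι → ℝ≥0∞) (i : ι) : f i ≤ eSum p f := by
  rcases eq_or_ne p ∞ with rfl | hp'
  · rw [eSum_top]; exact le_iSup f i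
  · have hpt : 0 < p.toReal := toReal_pos' hp hp'
    rw [eSum_of_ne_top hp' f]
    calc f i = ((f i) ^ p.toReal) ^ (1 / p.toReal) := by
          rw [← ENNReal.rpow_mul, mul_one_div_cancel hpt.ne', ENNReal.rpow_one]
      _ ≤ _ := ENNReal.rpow_le_rpow (ENNReal.le_tsum i) (by positivity)

lemma eSum_mul_const {p : ℝ≥0∞} (hp : 1 ≤ p) (f : ι → ℝ≥0∞) (c : ℝ≥0∞) :
    eSum p (fun i => f i * c) = eSum p f * c := by
  rcases eq_or_ne p ∞ with rfl | hp'
  · simp only [eSum_top]; exact (ENNReal.iSup_mul f c).symm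
  · have hpt : 0 < p.toReal := toReal_pos' hp hp'
    simp only [eSum_of_ne_top hp']
    have h1 : ∀ i, (f i * c) ^ p.toReal = f i ^ p.toReal * c ^ p.toReal := fun i =>
      ENNReal.mul_rpow_of_nonneg _ _ hpt.le
    simp_rw [h1, ENNReal.tsum_mul_right]
    rw [ENNReal.mul_rpow_of_nonneg _ _ (by positivity), ← ENNReal.rpow_mul,
      mul_one_div_cancel hpt.ne', ENNReal.rpow_one]

/-- Hölder's inequality for `ℝ≥0∞`-valued tsums. -/
lemma tsum_holder {θ : ℝ} (h0 : 0 < θ) (h1 : θ < 1) (f g : ι → ℝ≥0∞) :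
    ∑' i, f i ^ θ * g i ^ (1 - θ) ≤ (∑' i, f i) ^ θ * (∑' i, g i) ^ (1 - θ) := by
  letI : MeasurableSpace ι := ⊤
  haveI : MeasurableSingletonClass ι := ⟨fun _ => trivial⟩
  have hpq : (1/θ).HolderConjugate (1/(1-θ)) := by
    constructor
    · rw [one_div, inv_inv, one_div, inv_inv, inv_one]; ring
    · exact one_div_pos.2 h0
    · exact one_div_pos.2 (by linarith)
  have key := ENNReal.lintegral_mul_le_Lp_mul_Lq (μ := Measure.count) hpq
    (f := fun i => f i ^ θ) (g := fun i => g i ^ (1 - θ))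
    measurable_from_top.aemeasurable measurable_from_top.aemeasurable
  have e1 : ∀ i, (f i ^ θ) ^ (1/θ) = f i := fun i => by
    rw [← ENNReal.rpow_mul, mul_one_div_cancel h0.ne', ENNReal.rpow_one]
  have e2 : ∀ i, (g i ^ (1 - θ)) ^ (1/(1-θ)) = g i := fun i => by
    rw [← ENNReal.rpow_mul, mul_one_div_cancel (by linarith : (1 : ℝ) - θ ≠ 0),
      ENNReal.rpow_one]
  simp only [lintegral_count, Pi.mul_apply, e1, e2, one_div_one_div] at key
  exact key

lemma iSup_holder {θ : ℝ} (h0 : 0 ≤ θ) (h1 : θ ≤ 1) (f g : ι → ℝ≥0∞) :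
    ⨆ i, f i ^ θ * g i ^ (1 - θ) ≤ (⨆ i, f i) ^ θ * (⨆ i, g i) ^ (1 - θ) :=
  iSup_le fun i => mul_le_mul' (ENNReal.rpow_le_rpow (le_iSup f i) h0)
    (ENNReal.rpow_le_rpow (le_iSup g i) (by linarith))

lemma eSum_holder {p : ℝ≥0∞} (hp : 1 ≤ p) {θ : ℝ} (h0 : 0 < θ) (h1 : θ < 1)
    (f g : ι → ℝ≥0∞) :
    eSum p (fun i => f i ^ θ * g i ^ (1 - θ)) ≤ eSum p f ^ θ * eSum p g ^ (1 - θ) := by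
  rcases eq_or_ne p ∞ with rfl | hp'
  · simp only [eSum_top]; exact iSup_holder h0.le h1.le f g
  · have hpt : 0 < p.toReal := toReal_pos' hp hp'
    simp only [eSum_of_ne_top hp']
    have e : ∀ i, (f i ^ θ * g i ^ (1 - θ)) ^ p.toReal
        = (f i ^ p.toReal) ^ θ * (g i ^ p.toReal) ^ (1 - θ) := fun i => by
      rw [ENNReal.mul_rpow_of_nonneg _ _ hpt.le, ← ENNReal.rpow_mul, ← ENNReal.rpow_mul,
        ← ENNReal.rpow_mul, ← ENNReal.rpow_mul, mul_comm θ p.toReal,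
        mul_comm (1 - θ) p.toReal]
    simp_rw [e]
    calc (∑' i, (f i ^ p.toReal) ^ θ * (g i ^ p.toReal) ^ (1 - θ)) ^ (1 / p.toReal)
        ≤ ((∑' i, f i ^ p.toReal) ^ θ * (∑' i, g i ^ p.toReal) ^ (1 - θ)) ^ (1 / p.toReal) :=
          ENNReal.rpow_le_rpow (tsum_holder h0 h1 _ _) (by positivity)
      _ = _ := by
          rw [ENNReal.mul_rpow_of_nonneg _ _ (by positivity), ← ENNReal.rpow_mul,
            ← ENNReal.rpow_mul, ← ENNReal.rpow_mul, ← ENNReal.rpow_mul,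
            mul_comm θ (1 / p.toReal), mul_comm (1 - θ) (1 / p.toReal)]

lemma eSum_collapse {r : ℝ≥0∞} (hr1 : 1 < r) (hr2 : r ≠ ∞) (X Y : ι → ℝ≥0∞) :
    eSum r (fun i => X i ^ (1 / r.toReal) * Y i ^ (1 - 1 / r.toReal)) ≤
      (∑' i, X i) ^ (1 / r.toReal) * (⨆ i, Y i) ^ (1 - 1 / r.toReal) := by
  have hrt : 1 < r.toReal := one_lt_toReal hr1 hr2
  have hrt0 : 0 < r.toReal := lt_trans zero_lt_one hrt
  rw [eSum_of_ne_top hr2]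
  have e : ∀ i, (X i ^ (1 / r.toReal) * Y i ^ (1 - 1 / r.toReal)) ^ r.toReal
      = X i * Y i ^ (r.toReal - 1) := fun i => by
    rw [ENNReal.mul_rpow_of_nonneg _ _ hrt0.le, ← ENNReal.rpow_mul, ← ENNReal.rpow_mul,
      one_div_mul_cancel hrt0.ne', ENNReal.rpow_one, sub_mul, one_mul,
      one_div_mul_cancel hrt0.ne']
  simp_rw [e]
  calc (∑' i, X i * Y i ^ (r.toReal - 1)) ^ (1 / r.toReal)
      ≤ (∑' i, X i * (⨆ j, Y j) ^ (r.toReal - 1)) ^ (1 / r.toReal) :=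
        ENNReal.rpow_le_rpow (ENNReal.tsum_le_tsum fun i =>
          mul_le_mul_right (ENNReal.rpow_le_rpow (le_iSup Y i) (by linarith)) _)
          (by positivity)
    _ = ((∑' i, X i) * (⨆ j, Y j) ^ (r.toReal - 1)) ^ (1 / r.toReal) := by
        rw [ENNReal.tsum_mul_right]
    _ = _ := by
        rw [ENNReal.mul_rpow_of_nonneg _ _ (by positivity), ← ENNReal.rpow_mul]
        congr 2
        field_simp

def mE (p q : ℝ≥0∞) (u : ι → ι → ℝ≥0∞) : ℝ≥0∞ :=
  eSum q (fun n => eSum p (fun m => u m n))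

lemma mE_mono {p q : ℝ≥0∞} {u v : ι → ι → ℝ≥0∞} (h : ∀ m n, u m n ≤ v m n) :
    mE p q u ≤ mE p q v :=
  eSum_mono fun n => eSum_mono fun m => h m n

lemma le_mE {p q : ℝ≥0∞} (hp : 1 ≤ p) (hq : 1 ≤ q) (u : ι → ι → ℝ≥0∞) (m n : ι) :
    u m n ≤ mE p q u :=
  le_trans (le_trans (le_eSum hp _ m) (le_eSum hq (fun n => eSum p fun m => u m n) n)) le_rfl

lemma mE_holder_q {p q : ℝ≥0∞} (hp : 1 ≤ p) (hq1 : 1 < q) (hq2 : q ≠ ∞)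
    (F G : ι → ι → ℝ≥0∞) :
    mE p q (fun m n => F m n ^ (1 / q.toReal) * G m n ^ (1 - 1 / q.toReal)) ≤
      mE p 1 F ^ (1 / q.toReal) * mE p ∞ G ^ (1 - 1 / q.toReal) := by
  have hqt : 1 < q.toReal := one_lt_toReal hq1 hq2
  have h0 : 0 < 1 / q.toReal := by positivity
  have h1 : 1 / q.toReal < 1 := by rw [div_lt_one (by linarith)]; exact hqt
  refine le_trans (eSum_mono fun n => eSum_holder hp h0 h1 _ _) ?_
  have := eSum_collapse hq1 hq2 (fun n => eSum p fun m => F m n)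
    (fun n => eSum p fun m => G m n)
  simpa [mE, eSum_one, eSum_top] using this

lemma mE_holder_p {p q : ℝ≥0∞} (hp1 : 1 < p) (hp2 : p ≠ ∞) (hq : 1 ≤ q)
    (F G : ι → ι → ℝ≥0∞) :
    mE p q (fun m n => F m n ^ (1 / p.toReal) * G m n ^ (1 - 1 / p.toReal)) ≤
      mE 1 q F ^ (1 / p.toReal) * mE ∞ q G ^ (1 - 1 / p.toReal) := by
  have hpt : 1 < p.toReal := one_lt_toReal hp1 hp2
  have h0 : 0 < 1 / p.toReal := by positivity
  have h1 : 1 / p.toReal < 1 := by rw [div_lt_one (by linarith)]; exact hpt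
  refine le_trans (eSum_mono fun n => eSum_collapse hp1 hp2 _ _) ?_
  have := eSum_holder hq h0 h1 (fun n => ∑' m, F m n) (fun n => ⨆ m, G m n)
  simpa [mE, eSum_one, eSum_top] using this

def Tk (k : ι → ι → ι → ι → ℝ≥0∞) (u : ι → ι → ℝ≥0∞) (m' n' : ι) : ℝ≥0∞ :=
  ∑' mn : ι × ι, k m' n' mn.1 mn.2 * u mn.1 mn.2

lemma Tk_eq (k : ι → ι → ι → ι → ℝ≥0∞) (u : ι → ι → ℝ≥0∞) (m' n' : ι) :
    Tk k u m' n' = ∑' m, ∑' n, k m' n' m n * u m n :=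
  ENNReal.tsum_prod (f := fun m n => k m' n' m n * u m n)

lemma Tk_holder {θ : ℝ} (h0 : 0 < θ) (h1 : θ < 1) (k : ι → ι → ι → ι → ℝ≥0∞)
    (v w : ι → ι → ℝ≥0∞) (m' n' : ι) :
    Tk k (fun m n => v m n ^ θ * w m n ^ (1 - θ)) m' n' ≤
      Tk k v m' n' ^ θ * Tk k w m' n' ^ (1 - θ) := by
  unfold Tk
  have e : ∀ mn : ι × ι, k m' n' mn.1 mn.2 * (v mn.1 mn.2 ^ θ * w mn.1 mn.2 ^ (1 - θ))
      = (k m' n' mn.1 mn.2 * v mn.1 mn.2) ^ θ * (k m' n' mn.1 mn.2 * w mn.1 mn.2) ^ (1 - θ) := by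
    intro mn
    rw [ENNReal.mul_rpow_of_nonneg _ _ h0.le, ENNReal.mul_rpow_of_nonneg _ _ (by linarith)]
    calc k m' n' mn.1 mn.2 * (v mn.1 mn.2 ^ θ * w mn.1 mn.2 ^ (1 - θ))
        = (k m' n' mn.1 mn.2 ^ θ * k m' n' mn.1 mn.2 ^ (1 - θ)) *
            (v mn.1 mn.2 ^ θ * w mn.1 mn.2 ^ (1 - θ)) := by
          rw [← ENNReal.rpow_add_of_nonneg _ _ h0.le (by linarith), add_sub_cancel,
            ENNReal.rpow_one]
      _ = _ := by ring
  simp_rw [e]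
  exact tsum_holder h0 h1 _ _

/-- interpolation identity : `(x c^a)^θ (x c^b)^(1-θ) = x` when `aθ + b(1-θ) = 0`. -/
lemma mul_rpow_interp {x c : ℝ≥0∞} (hc : c ≠ 0) (hc' : c ≠ ∞) {a b θ : ℝ}
    (hθ0 : 0 ≤ θ) (hθ1 : θ ≤ 1) (h : a * θ + b * (1 - θ) = 0) :
    (x * c ^ a) ^ θ * (x * c ^ b) ^ (1 - θ) = x := by
  rw [ENNReal.mul_rpow_of_nonneg _ _ hθ0, ENNReal.mul_rpow_of_nonneg _ _ (by linarith),
    ← ENNReal.rpow_mul c, ← ENNReal.rpow_mul c]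
  calc x ^ θ * c ^ (a * θ) * (x ^ (1 - θ) * c ^ (b * (1 - θ)))
      = (x ^ θ * x ^ (1 - θ)) * (c ^ (a * θ) * c ^ (b * (1 - θ))) := by ring
    _ = x := by
        rw [← ENNReal.rpow_add_of_nonneg _ _ hθ0 (by linarith), add_sub_cancel,
          ← ENNReal.rpow_add _ _ hc hc', h, ENNReal.rpow_one, ENNReal.rpow_zero, mul_one]

lemma rpow_self_interp {s : ℝ≥0∞} (hs : s ≠ ∞) {a b : ℝ} (ha : 0 < a) (hab : a + b = 1) :
    s ^ a * s ^ b = s := by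
  rcases eq_or_ne s 0 with rfl | hs0
  · rw [ENNReal.zero_rpow_of_pos ha, zero_mul]
  · rw [← ENNReal.rpow_add _ _ hs0 hs, hab, ENNReal.rpow_one]

def Bdd (k : ι → ι → ι → ι → ℝ≥0∞) (p q S : ℝ≥0∞) : Prop :=
  ∀ u : ι → ι → ℝ≥0∞, mE p q u < ∞ → mE p q (Tk k u) ≤ S * mE p q u

end S9

namespace S9

variable {ι : Type*} {k : ι → ι → ι → ι → ℝ≥0∞} {S : ℝ≥0∞}

lemma cornerII (hc3 : ∀ m' n', (∑' m, ∑' n, k m' n' m n) ≤ S) : Bdd k ∞ ∞ S := by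
  intro u _
  simp only [mE, eSum_top]
  refine iSup_le fun n' => iSup_le fun m' => ?_
  rw [Tk_eq]
  calc ∑' m, ∑' n, k m' n' m n * u m n
      ≤ ∑' m, ∑' n, k m' n' m n * (⨆ n'', ⨆ m'', u m'' n'') := by
        refine ENNReal.tsum_le_tsum fun m => ENNReal.tsum_le_tsum fun n => ?_
        exact mul_le_mul_right (le_trans (le_iSup (fun m'' => u m'' n) m)
          (le_iSup (fun n'' => ⨆ m'', u m'' n'') n)) _
    _ = (∑' m, ∑' n, k m' n' m n) * (⨆ n'', ⨆ m'', u m'' n'') := by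
        simp_rw [ENNReal.tsum_mul_right]
    _ ≤ S * (⨆ n'', ⨆ m'', u m'' n'') := mul_le_mul_left (hc3 m' n') _

lemma corner11 (hc4 : ∀ m n, (∑' n', ∑' m', k m' n' m n) ≤ S) : Bdd k 1 1 S := by
  intro u _
  simp only [mE, eSum_one]
  simp_rw [Tk_eq]
  calc ∑' n', ∑' m', ∑' m, ∑' n, k m' n' m n * u m n
      = ∑' n', ∑' m, ∑' m', ∑' n, k m' n' m n * u m n := by
        exact tsum_congr fun n' => ENNReal.tsum_comm
    _ = ∑' m, ∑' n', ∑' m', ∑' n, k m' n' m n * u m n := ENNReal.tsum_comm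
    _ = ∑' m, ∑' n', ∑' n, ∑' m', k m' n' m n * u m n := by
        exact tsum_congr fun m => tsum_congr fun n' => ENNReal.tsum_comm
    _ = ∑' m, ∑' n, ∑' n', ∑' m', k m' n' m n * u m n := by
        exact tsum_congr fun m => ENNReal.tsum_comm
    _ = ∑' m, ∑' n, (∑' n', ∑' m', k m' n' m n) * u m n := by
        simp_rw [ENNReal.tsum_mul_right]
    _ ≤ ∑' m, ∑' n, S * u m n := by
        exact ENNReal.tsum_le_tsum fun m => ENNReal.tsum_le_tsum fun n =>
          mul_le_mul_left (hc4 m n) _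
    _ = S * ∑' m, ∑' n, u m n := by simp_rw [ENNReal.tsum_mul_left]
    _ = S * ∑' n, ∑' m, u m n := by rw [ENNReal.tsum_comm]

lemma cornerI1 (hc1 : ∀ n, (∑' n', ⨆ m', ∑' m, k m' n' m n) ≤ S) : Bdd k ∞ 1 S := by
  intro u _
  simp only [mE, eSum_one, eSum_top]
  have step : ∀ n', (⨆ m', Tk k u m' n') ≤
      ∑' n, (⨆ m', ∑' m, k m' n' m n) * (⨆ m'', u m'' n) := by
    intro n'
    refine iSup_le fun m' => ?_
    rw [Tk_eq, ENNReal.tsum_comm]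
    refine ENNReal.tsum_le_tsum fun n => ?_
    calc ∑' m, k m' n' m n * u m n
        ≤ ∑' m, k m' n' m n * (⨆ m'', u m'' n) :=
          ENNReal.tsum_le_tsum fun m => mul_le_mul_right (le_iSup (fun m'' => u m'' n) m) _
      _ = (∑' m, k m' n' m n) * (⨆ m'', u m'' n) := ENNReal.tsum_mul_right
      _ ≤ (⨆ m''', ∑' m, k m''' n' m n) * (⨆ m'', u m'' n) :=
          mul_le_mul_left (le_iSup (fun m''' => ∑' m, k m''' n' m n) m') _
  calc ∑' n', ⨆ m', Tk k u m' n'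
      ≤ ∑' n', ∑' n, (⨆ m', ∑' m, k m' n' m n) * (⨆ m'', u m'' n) :=
        ENNReal.tsum_le_tsum step
    _ = ∑' n, ∑' n', (⨆ m', ∑' m, k m' n' m n) * (⨆ m'', u m'' n) := ENNReal.tsum_comm
    _ = ∑' n, (∑' n', ⨆ m', ∑' m, k m' n' m n) * (⨆ m'', u m'' n) := by
        simp_rw [ENNReal.tsum_mul_right]
    _ ≤ ∑' n, S * (⨆ m'', u m'' n) :=
        ENNReal.tsum_le_tsum fun n => mul_le_mul_left (hc1 n) _
    _ = S * ∑' n, ⨆ m'', u m'' n := ENNReal.tsum_mul_left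

lemma corner1I (hc2 : ∀ n', (∑' n, ⨆ m, ∑' m', k m' n' m n) ≤ S) : Bdd k 1 ∞ S := by
  intro u _
  simp only [mE, eSum_one, eSum_top]
  refine iSup_le fun n' => ?_
  calc ∑' m', Tk k u m' n'
      = ∑' m', ∑' m, ∑' n, k m' n' m n * u m n := by simp_rw [Tk_eq]
    _ = ∑' m, ∑' m', ∑' n, k m' n' m n * u m n := ENNReal.tsum_comm
    _ = ∑' m, ∑' n, ∑' m', k m' n' m n * u m n := tsum_congr fun m => ENNReal.tsum_comm
    _ = ∑' m, ∑' n, (∑' m', k m' n' m n) * u m n := by simp_rw [ENNReal.tsum_mul_right]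
    _ ≤ ∑' m, ∑' n, (⨆ m'', ∑' m', k m' n' m'' n) * u m n := by
        refine ENNReal.tsum_le_tsum fun m => ENNReal.tsum_le_tsum fun n =>
          mul_le_mul_left (le_iSup (fun m'' => ∑' m', k m' n' m'' n) m) _
    _ = ∑' n, ∑' m, (⨆ m'', ∑' m', k m' n' m'' n) * u m n := ENNReal.tsum_comm
    _ = ∑' n, (⨆ m'', ∑' m', k m' n' m'' n) * ∑' m, u m n := by
        simp_rw [ENNReal.tsum_mul_left]
    _ ≤ ∑' n, (⨆ m'', ∑' m', k m' n' m'' n) * (⨆ n'', ∑' m, u m n'') := by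
        refine ENNReal.tsum_le_tsum fun n =>
          mul_le_mul_right (le_iSup (fun n'' => ∑' m, u m n'') n) _
    _ = (∑' n, ⨆ m'', ∑' m', k m' n' m'' n) * (⨆ n'', ∑' m, u m n'') :=
        ENNReal.tsum_mul_right
    _ ≤ S * (⨆ n'', ∑' m, u m n'') := mul_le_mul_left (hc2 n') _

end S9

namespace S9

variable {ι : Type*} {k : ι → ι → ι → ι → ℝ≥0∞} {S : ℝ≥0∞}

lemma stepA {p q : ℝ≥0∞} (hp : 1 ≤ p) (hq1 : 1 < q) (hq2 : q ≠ ∞)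
    (H1 : Bdd k p 1 S) (HI : Bdd k p ∞ S) : Bdd k p q S := by
  intro u hu
  have hq : 1 ≤ q := hq1.le
  set qt := q.toReal with hqtdef
  have hqt : 1 < qt := one_lt_toReal hq1 hq2
  have hqt0 : 0 < qt := by linarith
  set θ := 1 / qt with hθdef
  have hθ0 : 0 < θ := by rw [hθdef]; positivity
  have hθ1 : θ < 1 := by rw [hθdef, div_lt_one hqt0]; exact hqt
  have hqtθ : qt * θ = 1 := by rw [hθdef]; field_simp
  set s : ι → ℝ≥0∞ := fun n => eSum p (fun m => u m n) with hs
  have hmEu : mE p q u = eSum q s := by rw [hs]; rfl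
  have hsfin : ∀ n, s n ≠ ∞ := fun n =>
    (lt_of_le_of_lt (le_of_le_of_eq (le_eSum hq s n) hmEu.symm) hu).ne
  set v : ι → ι → ℝ≥0∞ := fun m n => u m n * s n ^ (qt - 1) with hv
  set w : ι → ι → ℝ≥0∞ := fun m n => u m n * s n ^ (-1 : ℝ) with hw
  have hueq : u = fun m n => v m n ^ θ * w m n ^ (1 - θ) := by
    funext m n
    rcases eq_or_ne (s n) 0 with hs0 | hs0
    · have hu0 : u m n = 0 := le_antisymm
        (by rw [← hs0, hs]; exact le_eSum hp _ m) zero_le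
      simp [hv, hw, hu0, ENNReal.zero_rpow_of_pos hθ0]
    · exact (mul_rpow_interp hs0 (hsfin n) hθ0.le hθ1.le
        (by rw [hθdef]; field_simp; ring)).symm
  have hv1 : mE p 1 v = mE p q u ^ qt := by
    rw [hmEu, eSum_of_ne_top hq2 s, ← ENNReal.rpow_mul, one_div_mul_cancel hqt0.ne',
      ENNReal.rpow_one]
    simp only [mE, eSum_one]
    refine tsum_congr fun n => ?_
    rw [hv]
    rw [eSum_mul_const hp (fun m => u m n) (s n ^ (qt - 1))]
    show s n * s n ^ (qt - 1) = s n ^ qt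
    calc s n * s n ^ (qt - 1) = s n ^ (1 : ℝ) * s n ^ (qt - 1) := by rw [ENNReal.rpow_one]
      _ = s n ^ qt := by
          rw [← ENNReal.rpow_add_of_nonneg _ _ zero_le_one (by linarith), add_sub_cancel]
  have hw1 : mE p ∞ w ≤ 1 := by
    simp only [mE, eSum_top]
    refine iSup_le fun n => ?_
    rw [hw]
    rw [eSum_mul_const hp (fun m => u m n) (s n ^ (-1 : ℝ))]
    show s n * s n ^ (-1 : ℝ) ≤ 1
    rw [ENNReal.rpow_neg_one]
    rcases eq_or_ne (s n) 0 with h | h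
    · simp [h]
    · rw [ENNReal.mul_inv_cancel h (hsfin n)]
  have hfin1 : mE p 1 v < ∞ := by
    rw [hv1]; exact ENNReal.rpow_lt_top_of_nonneg (by linarith) hu.ne
  have hfinI : mE p ∞ w < ∞ := lt_of_le_of_lt hw1 ENNReal.one_lt_top
  calc mE p q (Tk k u)
      = mE p q (Tk k (fun m n => v m n ^ θ * w m n ^ (1 - θ))) := by rw [← hueq]
    _ ≤ mE p q (fun m' n' => Tk k v m' n' ^ θ * Tk k w m' n' ^ (1 - θ)) :=
        mE_mono fun m' n' => Tk_holder hθ0 hθ1 k v w m' n'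
    _ ≤ mE p 1 (Tk k v) ^ θ * mE p ∞ (Tk k w) ^ (1 - θ) := by
        have := mE_holder_q hp hq1 hq2 (Tk k v) (Tk k w)
        rw [← hθdef] at this
        exact this
    _ ≤ (S * mE p 1 v) ^ θ * (S * mE p ∞ w) ^ (1 - θ) :=
        mul_le_mul' (ENNReal.rpow_le_rpow (H1 v hfin1) hθ0.le)
          (ENNReal.rpow_le_rpow (HI w hfinI) (by linarith))
    _ ≤ (S * mE p q u ^ qt) ^ θ * (S * 1) ^ (1 - θ) := by
        rw [hv1]
        exact mul_le_mul' le_rfl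
          (ENNReal.rpow_le_rpow (mul_le_mul' le_rfl hw1) (by linarith))
    _ = S * mE p q u := by
        rw [mul_one, ENNReal.mul_rpow_of_nonneg _ _ hθ0.le, ← ENNReal.rpow_mul, hqtθ,
          ENNReal.rpow_one]
        calc S ^ θ * mE p q u * S ^ (1 - θ)
            = S ^ θ * S ^ (1 - θ) * mE p q u := by ring
          _ = S * mE p q u := by
              rw [← ENNReal.rpow_add_of_nonneg _ _ hθ0.le (by linarith), add_sub_cancel,
                ENNReal.rpow_one]

lemma stepB [Nonempty ι] {p q : ℝ≥0∞} (hp1 : 1 < p) (hp2 : p ≠ ∞) (hq : 1 ≤ q)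
    (H1 : Bdd k 1 q S) (HI : Bdd k ∞ q S) : Bdd k p q S := by
  intro u hu
  have hp : 1 ≤ p := hp1.le
  set pt := p.toReal with hptdef
  have hpt : 1 < pt := one_lt_toReal hp1 hp2
  have hpt0 : 0 < pt := by linarith
  set θ := 1 / pt with hθdef
  have hθ0 : 0 < θ := by rw [hθdef]; positivity
  have hθ1 : θ < 1 := by rw [hθdef, div_lt_one hpt0]; exact hpt
  have hptθ : pt * θ = 1 := by rw [hθdef]; field_simp
  set s : ι → ℝ≥0∞ := fun n => eSum p (fun m => u m n) with hs
  have hmEu : mE p q u = eSum q s := by rw [hs]; rfl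
  have hsfin : ∀ n, s n ≠ ∞ := fun n =>
    (lt_of_le_of_lt (le_of_le_of_eq (le_eSum hq s n) hmEu.symm) hu).ne
  set v : ι → ι → ℝ≥0∞ := fun m n => u m n ^ pt * s n ^ (1 - pt) with hv
  set w : ι → ι → ℝ≥0∞ := fun m n => s n with hw
  have hueq : u = fun m n => v m n ^ θ * w m n ^ (1 - θ) := by
    funext m n
    rcases eq_or_ne (s n) 0 with hs0 | hs0
    · have hu0 : u m n = 0 := le_antisymm
        (by rw [← hs0, hs]; exact le_eSum hp _ m) zero_le
      simp [hv, hw, hs0, hu0, ENNReal.zero_rpow_of_pos hpt0,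
        ENNReal.zero_rpow_of_pos hθ0]
    · have e1 : v m n ^ θ = u m n * s n ^ ((1 - pt) * θ) := by
        rw [hv]
        simp only
        rw [ENNReal.mul_rpow_of_nonneg _ _ hθ0.le, ← ENNReal.rpow_mul, ← ENNReal.rpow_mul,
          hptθ, ENNReal.rpow_one]
      rw [e1]
      show u m n = u m n * s n ^ ((1 - pt) * θ) * s n ^ (1 - θ)
      rw [mul_assoc, ← ENNReal.rpow_add _ _ hs0 (hsfin n)]
      rw [show (1 - pt) * θ + (1 - θ) = 0 by rw [hθdef]; field_simp; ring]
      rw [ENNReal.rpow_zero, mul_one]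
  have hspt : ∀ n, s n ^ pt = ∑' m, u m n ^ pt := by
    intro n
    show (eSum p fun m => u m n) ^ pt = _
    rw [eSum_of_ne_top hp2, ← ENNReal.rpow_mul, one_div_mul_cancel hpt0.ne',
      ENNReal.rpow_one]
  have hv1 : mE 1 q v = mE p q u := by
    rw [hmEu]
    simp only [mE, eSum_one]
    refine congrArg (eSum q) (funext fun n => ?_)
    show (∑' m, u m n ^ pt * s n ^ (1 - pt)) = s n
    rw [ENNReal.tsum_mul_right, ← hspt n]
    exact rpow_self_interp (hsfin n) hpt0 (by ring)
  have hw1 : mE ∞ q w = mE p q u := by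
    rw [hmEu]
    simp only [mE, eSum_top, hw, iSup_const]
  have hfin1 : mE 1 q v < ∞ := by rw [hv1]; exact hu
  have hfinI : mE ∞ q w < ∞ := by rw [hw1]; exact hu
  calc mE p q (Tk k u)
      = mE p q (Tk k (fun m n => v m n ^ θ * w m n ^ (1 - θ))) := by rw [← hueq]
    _ ≤ mE p q (fun m' n' => Tk k v m' n' ^ θ * Tk k w m' n' ^ (1 - θ)) :=
        mE_mono fun m' n' => Tk_holder hθ0 hθ1 k v w m' n'
    _ ≤ mE 1 q (Tk k v) ^ θ * mE ∞ q (Tk k w) ^ (1 - θ) := by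
        have := mE_holder_p hp1 hp2 hq (Tk k v) (Tk k w)
        rw [← hθdef] at this
        exact this
    _ ≤ (S * mE 1 q v) ^ θ * (S * mE ∞ q w) ^ (1 - θ) :=
        mul_le_mul' (ENNReal.rpow_le_rpow (H1 v hfin1) hθ0.le)
          (ENNReal.rpow_le_rpow (HI w hfinI) (by linarith))
    _ = S * mE p q u := by
        rw [hv1, hw1, ENNReal.mul_rpow_of_nonneg _ _ hθ0.le,
          ENNReal.mul_rpow_of_nonneg _ _ (by linarith : (0:ℝ) ≤ 1 - θ)]
        calc S ^ θ * mE p q u ^ θ * (S ^ (1 - θ) * mE p q u ^ (1 - θ))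
            = S ^ θ * S ^ (1 - θ) * (mE p q u ^ θ * mE p q u ^ (1 - θ)) := by ring
          _ = S * mE p q u := by
              rw [← ENNReal.rpow_add_of_nonneg _ _ hθ0.le (by linarith),
                ← ENNReal.rpow_add_of_nonneg _ _ hθ0.le (by linarith), add_sub_cancel,
                ENNReal.rpow_one, ENNReal.rpow_one]

lemma master [Nonempty ι]
    (hc1 : ∀ n, (∑' n', ⨆ m', ∑' m, k m' n' m n) ≤ S)
    (hc2 : ∀ n', (∑' n, ⨆ m, ∑' m', k m' n' m n) ≤ S)
    (hc3 : ∀ m' n', (∑' m, ∑' n, k m' n' m n) ≤ S)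
    (hc4 : ∀ m n, (∑' n', ∑' m', k m' n' m n) ≤ S) :
    ∀ p q : ℝ≥0∞, 1 ≤ p → 1 ≤ q → Bdd k p q S := by
  have B11 := corner11 hc4
  have BII := cornerII hc3
  have BI1 := cornerI1 hc1
  have B1I := corner1I hc2
  have Bq : ∀ q : ℝ≥0∞, 1 ≤ q → Bdd k 1 q S ∧ Bdd k ∞ q S := by
    intro q hq
    rcases eq_or_ne q ∞ with rfl | hqt
    · exact ⟨B1I, BII⟩
    rcases eq_or_lt_of_le hq with rfl | hq1
    · exact ⟨B11, BI1⟩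
    · exact ⟨stepA le_rfl hq1 hqt B11 B1I, stepA le_top hq1 hqt BI1 BII⟩
  intro p q hp hq
  rcases eq_or_ne p ∞ with rfl | hpt
  · exact (Bq q hq).2
  rcases eq_or_lt_of_le hp with rfl | hp1
  · exact (Bq q hq).1
  · exact stepB hp1 hpt hq (Bq q hq).1 (Bq q hq).2

end S9

namespace S9

lemma enorm_tsum_le {E : Type*} [NormedAddCommGroup E] [CompleteSpace E] {ι : Type*}
    (f : ι → E) : (‖∑' i, f i‖₊ : ℝ≥0∞) ≤ ∑' i, (‖f i‖₊ : ℝ≥0∞) := by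
  by_cases h : Summable fun i => ‖f i‖₊
  · rw [← ENNReal.coe_tsum h]
    exact ENNReal.coe_le_coe.2 (nnnorm_tsum_le h)
  · have htop : (∑' i, (‖f i‖₊ : ℝ≥0∞)) = ∞ := by
      by_contra hne
      exact h (ENNReal.tsum_coe_ne_top_iff_summable.1 hne)
    simp [htop]

end S9


/-- Proposition 5.1 (iii): if the kernel `K` satisfies the two mixed
Schur conditions and the two plain Schur conditions, then the operator
`(Kc)_{m',n'} = Σ_{(m,n)} K_{m',n',m,n} c_{m,n}` is continuous on `ℓ^{p,q}` for all
`1 ≤ p, q ≤ ∞`. The lattice `Λ = αℤ^d × βℤ^d` is identified with `ℤ^d × ℤ^d`. -/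
theorem statement9 {d : ℕ}
    (K : (Fin d → ℤ) → (Fin d → ℤ) → (Fin d → ℤ) → (Fin d → ℤ) → ℂ)
    (h₁ : (⨆ n : Fin d → ℤ, ∑' n' : Fin d → ℤ, ⨆ m' : Fin d → ℤ, ∑' m : Fin d → ℤ,
      (‖K m' n' m n‖₊ : ℝ≥0∞)) < ⊤)
    (h₂ : (⨆ n' : Fin d → ℤ, ∑' n : Fin d → ℤ, ⨆ m : Fin d → ℤ, ∑' m' : Fin d → ℤ,
      (‖K m' n' m n‖₊ : ℝ≥0∞)) < ⊤)
    (h₃ : (⨆ m'n' : (Fin d → ℤ) × (Fin d → ℤ), ∑' mn : (Fin d → ℤ) × (Fin d → ℤ),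
      (‖K m'n'.1 m'n'.2 mn.1 mn.2‖₊ : ℝ≥0∞)) < ⊤)
    (h₄ : (⨆ mn : (Fin d → ℤ) × (Fin d → ℤ), ∑' m'n' : (Fin d → ℤ) × (Fin d → ℤ),
      (‖K m'n'.1 m'n'.2 mn.1 mn.2‖₊ : ℝ≥0∞)) < ⊤) :
    ∀ p q : ℝ≥0∞, 1 ≤ p → 1 ≤ q → ∃ C : ℝ≥0∞, 0 < C ∧ C < ⊤ ∧
      ∀ c : (Fin d → ℤ) → (Fin d → ℤ) → ℂ, lpqNorm p q c < ⊤ →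
        lpqNorm p q (fun m' n' =>
            ∑' mn : (Fin d → ℤ) × (Fin d → ℤ), K m' n' mn.1 mn.2 * c mn.1 mn.2) ≤
          C * lpqNorm p q c := by
  intro p q hp hq
  set k : (Fin d → ℤ) → (Fin d → ℤ) → (Fin d → ℤ) → (Fin d → ℤ) → ℝ≥0∞ := fun m' n' m n => (‖K m' n' m n‖₊ : ℝ≥0∞) with hk
  set A₁ := (⨆ n, ∑' n', ⨆ m', ∑' m, k m' n' m n) with hA₁
  set A₂ := (⨆ n', ∑' n, ⨆ m, ∑' m', k m' n' m n) with hA₂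
  set A₃ := (⨆ m'n' : (Fin d → ℤ) × (Fin d → ℤ), ∑' mn : (Fin d → ℤ) × (Fin d → ℤ), k m'n'.1 m'n'.2 mn.1 mn.2) with hA₃
  set A₄ := (⨆ mn : (Fin d → ℤ) × (Fin d → ℤ), ∑' m'n' : (Fin d → ℤ) × (Fin d → ℤ), k m'n'.1 m'n'.2 mn.1 mn.2) with hA₄
  set S := A₁ + A₂ + A₃ + A₄ + 1 with hS
  have hS1 : 1 ≤ S := le_add_self
  have hStop : S < ⊤ := by
    rw [hS]
    refine ENNReal.add_lt_top.2 ⟨ENNReal.add_lt_top.2 ⟨ENNReal.add_lt_top.2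
      ⟨ENNReal.add_lt_top.2 ⟨h₁, h₂⟩, h₃⟩, h₄⟩, ENNReal.one_lt_top⟩
  have hA1S : A₁ ≤ S := by
    rw [hS]; exact le_add_right (le_add_right (le_add_right le_self_add))
  have hA2S : A₂ ≤ S := by
    rw [hS]; exact le_add_right (le_add_right (le_add_right le_add_self))
  have hA3S : A₃ ≤ S := by
    rw [hS]; exact le_add_right (le_add_right le_add_self)
  have hA4S : A₄ ≤ S := by
    rw [hS]; exact le_add_right le_add_self
  have hc1 : ∀ n, (∑' n', ⨆ m', ∑' m, k m' n' m n) ≤ S := fun n =>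
    le_trans (le_iSup (fun n => ∑' n', ⨆ m', ∑' m, k m' n' m n) n) hA1S
  have hc2 : ∀ n', (∑' n, ⨆ m, ∑' m', k m' n' m n) ≤ S := fun n' =>
    le_trans (le_iSup (fun n' => ∑' n, ⨆ m, ∑' m', k m' n' m n) n') hA2S
  have hc3 : ∀ m' n', (∑' m, ∑' n, k m' n' m n) ≤ S := by
    intro m' n'
    have h := le_iSup (fun m'n' : (Fin d → ℤ) × (Fin d → ℤ) => ∑' mn : (Fin d → ℤ) × (Fin d → ℤ), k m'n'.1 m'n'.2 mn.1 mn.2) (m', n')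
    rw [ENNReal.tsum_prod (f := fun m n => k m' n' m n)] at h
    exact le_trans h hA3S
  have hc4 : ∀ m n, (∑' n', ∑' m', k m' n' m n) ≤ S := by
    intro m n
    have h := le_iSup (fun mn : (Fin d → ℤ) × (Fin d → ℤ) => ∑' m'n' : (Fin d → ℤ) × (Fin d → ℤ), k m'n'.1 m'n'.2 mn.1 mn.2) (m, n)
    rw [ENNReal.tsum_prod (f := fun m' n' => k m' n' m n), ENNReal.tsum_comm] at h
    exact le_trans h hA4S
  have key := S9.master (k := k) hc1 hc2 hc3 hc4 p q hp hq
  refine ⟨S, lt_of_lt_of_le zero_lt_one hS1, hStop, ?_⟩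
  intro c hc
  set u : (Fin d → ℤ) → (Fin d → ℤ) → ℝ≥0∞ := fun m n => (‖c m n‖₊ : ℝ≥0∞) with hu
  have hufin : S9.mE p q u < ⊤ := hc
  calc lpqNorm p q (fun m' n' =>
          ∑' mn : (Fin d → ℤ) × (Fin d → ℤ), K m' n' mn.1 mn.2 * c mn.1 mn.2)
      ≤ S9.mE p q (S9.Tk k u) := by
        show S9.mE p q (fun m' n' =>
          (‖∑' mn : (Fin d → ℤ) × (Fin d → ℤ), K m' n' mn.1 mn.2 * c mn.1 mn.2‖₊ : ℝ≥0∞)) ≤ _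
        refine S9.mE_mono fun m' n' => ?_
        refine le_trans (S9.enorm_tsum_le _) (le_of_eq (tsum_congr fun mn => ?_))
        rw [nnnorm_mul, ENNReal.coe_mul]
    _ ≤ S * S9.mE p q u := key u hufin
    _ = S * lpqNorm p q c := rfl
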